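/- Let A be a unital C*-algebra with unit 1, and let f be a hermitian continuous linear functional on A. Then ‖f‖ = r_1(f), i.e. the norm of f equals inf { f₁(1) + f₂(1) : f = f₁ − f₂ with f₁, f₂ positive continuous linear functionals on A }. -/

import Mathlib

open scoped ComplexOrder NNReal

variable {A : Type*} [CStarAlgebra A] [PartialOrder A] [StarOrderedRing A]

/-- A continuous linear functional on a C*-algebra is positive if it is nonnegative on
positive elements (using the complex order). -/
def IsPosFunctional {A : Type*} [CStarAlgebra A] [PartialOrder A] [StarOrderedRing A]
    (f : A →L[ℂ] ℂ) : Prop :=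
  ∀ x : A, 0 ≤ x → 0 ≤ f x

/-- A continuous linear functional is hermitian if `f (star x) = conj (f x)` for all `x`. -/
def IsHermitianFunctional {A : Type*} [CStarAlgebra A] (f : A →L[ℂ] ℂ) : Prop :=
  ∀ x : A, f (star x) = starRingEnd ℂ (f x)

/-- The seminorm `r_a` associated with a positive element `a`:
`r_a(f) = inf { f₁(a) + f₂(a) | f = f₁ - f₂, f₁, f₂ positive }`. -/
noncomputable def rSeminorm {A : Type*} [CStarAlgebra A] [PartialOrder A] [StarOrderedRing A]
    (a : A) (f : A →L[ℂ] ℂ) : ℝ :=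
  sInf { r : ℝ | ∃ f₁ f₂ : A →L[ℂ] ℂ, IsPosFunctional f₁ ∧ IsPosFunctional f₂ ∧
    f = f₁ - f₂ ∧ (r : ℂ) = f₁ a + f₂ a }

namespace NRSAux

set_option linter.unusedSectionVars false

/-! ### Hermitian (real) parts of elements -/

noncomputable def herm (x : A) : A := (2:ℂ)⁻¹ • (x + star x)

noncomputable def iherm (x : A) : A := herm ((-Complex.I) • x)

lemma herm_sa (x : A) : IsSelfAdjoint (herm x) := by
  unfold herm
  rw [IsSelfAdjoint, star_smul, star_add, star_star]
  simp [Complex.star_def, add_comm]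

lemma iherm_sa (x : A) : IsSelfAdjoint (iherm x) := herm_sa _

lemma herm_of_sa {x : A} (hx : IsSelfAdjoint x) : herm x = x := by
  rw [herm, hx.star_eq, ← two_smul ℂ x, smul_smul]
  norm_num

lemma herm_add (x y : A) : herm (x + y) = herm x + herm y := by
  simp only [herm, star_add, smul_add]; abel

lemma star_real_smul (t : ℝ) (x : A) : star (t • x) = t • star x := by
  rw [← Complex.coe_smul, ← Complex.coe_smul, star_smul, Complex.star_def, Complex.conj_ofReal]

lemma herm_real_smul (t : ℝ) (x : A) : herm (t • x) = t • herm x := by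
  rw [herm, herm, star_real_smul, ← smul_add, smul_comm]

lemma herm_zero : herm (0 : A) = 0 := by simp [herm]

lemma norm_herm_le (x : A) : ‖herm x‖ ≤ ‖x‖ := by
  rw [herm, norm_smul]
  calc ‖(2:ℂ)⁻¹‖ * ‖x + star x‖ ≤ ‖(2:ℂ)⁻¹‖ * (‖x‖ + ‖x‖) := by
        gcongr
        · exact (norm_add_le _ _).trans (by rw [norm_star])
    _ = ‖x‖ := by simp; ring

lemma herm_add_I_smul (x : A) : herm x + Complex.I • iherm x = x := by
  have hst : star ((-Complex.I) • x) = Complex.I • star x := by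
    rw [star_smul, Complex.star_def, map_neg, Complex.conj_I, neg_neg]
  rw [iherm, herm, herm, hst]
  simp only [smul_add, smul_smul]
  match_scalars <;> simp [Complex.ext_iff] <;> norm_num

lemma herm_I_smul_of_sa {x : A} (hx : IsSelfAdjoint x) : herm (Complex.I • x) = 0 := by
  rw [herm, star_smul, hx.star_eq, Complex.star_def, Complex.conj_I, neg_smul,
    add_neg_cancel, smul_zero]

/-! ### Positive functionals are bounded by their value at 1 -/

lemma pos_im_sa {g : A →L[ℂ] ℂ} (hg : IsPosFunctional g) {h : A} (hh : IsSelfAdjoint h) :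
    (g h).im = 0 := by
  have h1 := hg _ (CFC.posPart_nonneg h)
  have h2 := hg _ (CFC.negPart_nonneg h)
  have h3 : g h = g h⁺ - g h⁻ := by rw [← map_sub, CFC.posPart_sub_negPart h hh]
  rw [Complex.le_def] at h1 h2
  rw [h3, Complex.sub_im, ← h1.2, ← h2.2, Complex.zero_im, sub_zero]

lemma pos_mono {g : A →L[ℂ] ℂ} (hg : IsPosFunctional g) {a b : A} (hab : a ≤ b) :
    g a ≤ g b := by
  have := hg _ (sub_nonneg.2 hab)
  rw [map_sub] at this
  exact sub_nonneg.1 this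

lemma sa_le_norm_smul_one {h : A} (hh : IsSelfAdjoint h) : h ≤ ‖h‖ • 1 := by
  rw [← Algebra.algebraMap_eq_smul_one]
  exact hh.le_algebraMap_norm_self

lemma neg_norm_smul_one_le_sa {h : A} (hh : IsSelfAdjoint h) : -(‖h‖ • (1:A)) ≤ h := by
  rw [← Algebra.algebraMap_eq_smul_one]
  exact hh.neg_algebraMap_norm_le_self

lemma pos_re_sa_bound {g : A →L[ℂ] ℂ} (hg : IsPosFunctional g) {h : A}
    (hh : IsSelfAdjoint h) : |(g h).re| ≤ (g 1).re * ‖h‖ := by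
  have e1 : g (‖h‖ • (1:A)) = (‖h‖ : ℂ) * g 1 := by
    rw [← Complex.coe_smul, map_smul, smul_eq_mul]
  have h1 := pos_mono hg (sa_le_norm_smul_one hh)
  have h2 := pos_mono hg (neg_norm_smul_one_le_sa hh)
  rw [e1, Complex.le_def] at h1
  rw [map_neg, e1, Complex.le_def] at h2
  have h1' := h1.1
  have h2' := h2.1
  simp only [Complex.neg_re, Complex.mul_re, Complex.ofReal_re, Complex.ofReal_im,
    zero_mul, sub_zero] at h1' h2'
  rw [abs_le]
  constructor <;> [nlinarith; nlinarith]

lemma pos_norm_le {g : A →L[ℂ] ℂ} (hg : IsPosFunctional g) : ‖g‖ ≤ (g 1).re := by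
  have h1re : 0 ≤ (g 1).re := by
    have := hg 1 zero_le_one
    rw [Complex.le_def] at this
    exact this.1
  refine g.opNorm_le_bound h1re fun x => ?_
  by_cases hx : g x = 0
  · rw [hx, norm_zero]; positivity
  set c : ℂ := (starRingEnd ℂ) (g x) / (‖g x‖ : ℂ) with hc
  have habs : (‖g x‖ : ℂ) ≠ 0 := by exact_mod_cast norm_ne_zero_iff.2 hx
  have hcnorm : ‖c‖ = 1 := by
    rw [hc, norm_div, RCLike.norm_conj, Complex.norm_real, norm_norm]
    exact div_self (norm_ne_zero_iff.2 hx)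
  set y := c • x with hy
  have hconj : (starRingEnd ℂ) (g x) * g x = ((‖g x‖^2 : ℝ) : ℂ) := by
    rw [mul_comm, Complex.mul_conj]
    simp [Complex.normSq_eq_norm_sq]
  have hgy : g y = ((‖g x‖ : ℝ) : ℂ) := by
    rw [hy, map_smul, smul_eq_mul, hc, div_mul_eq_mul_div, hconj]
    rw [div_eq_iff habs]
    push_cast
    ring
  -- decompose y
  have hdec : g y = g (herm y) + Complex.I * g (iherm y) := by
    conv_lhs => rw [← herm_add_I_smul y]
    rw [map_add, map_smul, smul_eq_mul]
  have hre : ‖g x‖ = (g (herm y)).re := by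
    have := congrArg Complex.re (hgy.symm.trans hdec)
    simpa [Complex.add_re, Complex.mul_re, pos_im_sa hg (iherm_sa y)] using this
  have hbound := pos_re_sa_bound hg (herm_sa y)
  have hny : ‖herm y‖ ≤ ‖x‖ := by
    refine (norm_herm_le y).trans ?_
    rw [hy, norm_smul, hcnorm, one_mul]
  calc ‖g x‖ = (g (herm y)).re := hre
    _ ≤ |(g (herm y)).re| := le_abs_self _
    _ ≤ (g 1).re * ‖herm y‖ := hbound
    _ ≤ (g 1).re * ‖x‖ := by gcongr

/-! ### Elementary order facts -/

lemma sa_one : IsSelfAdjoint (1 : A) := by rw [IsSelfAdjoint, star_one]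

lemma sa_real_smul (t : ℝ) {x : A} (hx : IsSelfAdjoint x) : IsSelfAdjoint (t • x) := by
  rw [IsSelfAdjoint, star_real_smul, hx.star_eq]

lemma smul_one_nonneg {t : ℝ} (ht : 0 ≤ t) : (0:A) ≤ t • 1 := by
  have key : t • (1:A) = star (Real.sqrt t • (1:A)) * (Real.sqrt t • (1:A)) := by
    rw [star_real_smul, star_one, smul_mul_smul_comm, Real.mul_self_sqrt ht, one_mul]
  rw [key]
  exact star_mul_self_nonneg _

lemma real_smul_nonneg {t : ℝ} (ht : 0 ≤ t) {z : A} (hz : 0 ≤ z) : 0 ≤ t • z := by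
  have h1 : CFC.sqrt z * CFC.sqrt z = z := CFC.sqrt_mul_sqrt_self z hz
  have hs : IsSelfAdjoint (CFC.sqrt z) := IsSelfAdjoint.of_nonneg (CFC.sqrt_nonneg z : (0:A) ≤ CFC.sqrt z)
  have key : t • z = star (Real.sqrt t • CFC.sqrt z) * (Real.sqrt t • CFC.sqrt z) := by
    rw [star_real_smul, hs.star_eq, smul_mul_smul_comm, Real.mul_self_sqrt ht, h1]
  rw [key]
  exact star_mul_self_nonneg _

lemma real_smul_le_smul {t : ℝ} (ht : 0 ≤ t) {x y : A} (h : x ≤ y) : t • x ≤ t • y := by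
  have := real_smul_nonneg ht (sub_nonneg.2 h)
  rw [smul_sub] at this
  exact sub_nonneg.1 this

lemma smul_one_le_smul_one {s t : ℝ} (h : s ≤ t) : (s • 1 : A) ≤ t • 1 := by
  have := smul_one_nonneg (A := A) (sub_nonneg.2 h)
  rw [sub_smul] at this
  exact sub_nonneg.1 this

lemma nonneg_of_smul_one_nonneg [Nontrivial A] {t : ℝ} (h : (0:A) ≤ t • 1) : 0 ≤ t := by
  by_contra h'
  push_neg at h'
  have h2 : (0:A) ≤ (-t) • 1 := smul_one_nonneg (by linarith)
  rw [neg_smul] at h2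
  have h3 : t • (1:A) = 0 := le_antisymm (neg_nonneg.1 h2) h
  rcases smul_eq_zero.mp h3 with h4 | h4
  · exact absurd h4 (by linarith)
  · exact one_ne_zero h4

/-! ### The upper spectral bound `sig` -/

noncomputable def sig (x : A) : ℝ := sInf {t : ℝ | x ≤ t • 1}

section Sig

variable [Nontrivial A]

lemma sig_set_nonempty {x : A} (hx : IsSelfAdjoint x) : {t : ℝ | x ≤ t • 1}.Nonempty :=
  ⟨‖x‖, sa_le_norm_smul_one hx⟩

lemma sig_set_bddBelow {x : A} (hx : IsSelfAdjoint x) : BddBelow {t : ℝ | x ≤ t • 1} := by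
  refine ⟨-‖x‖, fun t ht => ?_⟩
  have h1 : -(‖x‖ • (1:A)) ≤ t • 1 := (neg_norm_smul_one_le_sa hx).trans ht
  have h2 : (0:A) ≤ (t + ‖x‖) • 1 := by
    rw [add_smul]
    rw [neg_le_iff_add_nonneg] at h1
    exact h1
  have := nonneg_of_smul_one_nonneg h2
  linarith

lemma sig_le {x : A} (hx : IsSelfAdjoint x) {t : ℝ} (h : x ≤ t • 1) : sig x ≤ t :=
  csInf_le (sig_set_bddBelow hx) h

lemma le_of_sig_lt {x : A} (hx : IsSelfAdjoint x) {t : ℝ} (h : sig x < t) : x ≤ t • 1 := by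
  obtain ⟨s, hs, hst⟩ := exists_lt_of_csInf_lt (sig_set_nonempty hx) h
  exact le_trans hs (smul_one_le_smul_one hst.le)

lemma sig_le_norm {x : A} (hx : IsSelfAdjoint x) : sig x ≤ ‖x‖ :=
  sig_le hx (sa_le_norm_smul_one hx)

lemma sig_nonneg_of_nonneg {x : A} (hx : 0 ≤ x) : 0 ≤ sig x := by
  refine le_csInf (sig_set_nonempty (IsSelfAdjoint.of_nonneg hx)) fun t ht => ?_
  exact nonneg_of_smul_one_nonneg (hx.trans ht)

lemma sig_smul_one (t : ℝ) : sig (t • (1:A)) = t := by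
  refine le_antisymm (sig_le (sa_real_smul t sa_one) le_rfl) ?_
  refine le_csInf ⟨t, le_rfl⟩ fun s hs => ?_
  have h2 : (0:A) ≤ (s - t) • 1 := by
    rw [sub_smul, sub_nonneg]
    exact hs
  have := nonneg_of_smul_one_nonneg h2
  linarith

lemma sig_one : sig (1:A) = 1 := by
  have := sig_smul_one (A := A) 1
  rwa [one_smul] at this

lemma sig_neg_one : sig (-1:A) = -1 := by
  have := sig_smul_one (A := A) (-1)
  rwa [neg_smul, one_smul] at this

lemma sig_zero : sig (0:A) = 0 := by
  have := sig_smul_one (A := A) 0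
  rwa [zero_smul] at this

lemma sig_add_le {x y : A} (hx : IsSelfAdjoint x) (hy : IsSelfAdjoint y) :
    sig (x + y) ≤ sig x + sig y := by
  refine le_of_forall_pos_le_add fun ε hε => ?_
  have h1 : x ≤ (sig x + ε/2) • 1 := le_of_sig_lt hx (by linarith)
  have h2 : y ≤ (sig y + ε/2) • 1 := le_of_sig_lt hy (by linarith)
  have h3 : x + y ≤ (sig x + sig y + ε) • 1 := by
    calc x + y ≤ (sig x + ε/2) • 1 + (sig y + ε/2) • 1 := add_le_add h1 h2
      _ = (sig x + sig y + ε) • 1 := by rw [← add_smul]; ring_nf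
  exact sig_le (hx.add hy) h3

lemma sig_smul_le {c : ℝ} (hc : 0 < c) {x : A} (hx : IsSelfAdjoint x) :
    sig (c • x) ≤ c * sig x := by
  refine le_of_forall_pos_le_add fun ε hε => ?_
  have h1 : x ≤ (sig x + ε/c) • 1 := le_of_sig_lt hx (by have := div_pos hε hc; linarith)
  have h2 : c • x ≤ (c * sig x + ε) • 1 := by
    calc c • x ≤ c • ((sig x + ε/c) • 1) := real_smul_le_smul hc.le h1
      _ = (c * sig x + ε) • 1 := by
          rw [smul_smul]
          congr 1
          field_simp
  exact sig_le (sa_real_smul c hx) h2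

lemma sig_smul {c : ℝ} (hc : 0 < c) {x : A} (hx : IsSelfAdjoint x) :
    sig (c • x) = c * sig x := by
  refine le_antisymm (sig_smul_le hc hx) ?_
  have h2 := sig_smul_le (inv_pos.2 hc) (sa_real_smul c hx)
  rw [smul_smul, inv_mul_cancel₀ hc.ne', one_smul] at h2
  calc c * sig x ≤ c * (c⁻¹ * sig (c • x)) := by
        exact mul_le_mul_of_nonneg_left h2 hc.le
    _ = sig (c • x) := by field_simp

end Sig


/-! ### The functionals `q`, `p`, `p'` used in the sandwich argument -/

lemma re_f_real_smul (f : A →L[ℂ] ℂ) (t : ℝ) (x : A) : (f (t • x)).re = t * (f x).re := by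
  rw [← Complex.coe_smul, map_smul, smul_eq_mul]
  simp [Complex.mul_re]

lemma re_f_abs_le (f : A →L[ℂ] ℂ) (x : A) : |(f x).re| ≤ ‖f‖ * ‖x‖ := by
  calc |(f x).re| ≤ ‖f x‖ := by
        exact Complex.abs_re_le_norm _
    _ ≤ ‖f‖ * ‖x‖ := f.le_opNorm x

section Nontriv

variable [Nontrivial A]

lemma norm_le_of_between {z : A} (hz : IsSelfAdjoint z) {t : ℝ} (h1 : -(t • 1) ≤ z)
    (h2 : z ≤ t • 1) : ‖z‖ ≤ t := by
  rcases CStarAlgebra.norm_or_neg_norm_mem_spectrum hz with hsp | hsp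
  · exact (le_algebraMap_iff_spectrum_le (a := z) (r := t) hz).mp
      (by rwa [Algebra.algebraMap_eq_smul_one]) ‖z‖ hsp
  · have hz' : IsSelfAdjoint (-z) := hz.neg
    have hsp' : ‖z‖ ∈ spectrum ℝ (-z) := by
      rw [← spectrum.neg_eq, Set.mem_neg]
      exact hsp
    have h2' : -z ≤ t • 1 := neg_le.mp h1
    exact (le_algebraMap_iff_spectrum_le (a := -z) (r := t) hz').mp
      (by rwa [Algebra.algebraMap_eq_smul_one]) ‖z‖ hsp'

noncomputable def qf (f : A →L[ℂ] ℂ) (k : A) : ℝ :=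
  sSup {r : ℝ | ∃ j : A, 0 ≤ j ∧ j ≤ k ∧ r = (f j).re}

noncomputable def pf (f : A →L[ℂ] ℂ) (x : A) : ℝ := (‖f‖ * sig x + (f x).re) / 2

noncomputable def pf' (f : A →L[ℂ] ℂ) (x : A) : ℝ :=
  sInf {r : ℝ | ∃ k : A, 0 ≤ k ∧ r = pf f (x + k) - qf f k}

variable (f : A →L[ℂ] ℂ)

lemma q_mem_zero {k : A} (hk : 0 ≤ k) :
    (0:ℝ) ∈ {r : ℝ | ∃ j : A, 0 ≤ j ∧ j ≤ k ∧ r = (f j).re} :=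
  ⟨0, le_rfl, hk, by simp⟩

lemma q_ub {k : A} (hk : 0 ≤ k) :
    ∀ r ∈ {r : ℝ | ∃ j : A, 0 ≤ j ∧ j ≤ k ∧ r = (f j).re}, r ≤ pf f k := by
  rintro r ⟨j, hj0, hjk, rfl⟩
  have hksa : IsSelfAdjoint k := IsSelfAdjoint.of_nonneg hk
  set z := (2:ℝ) • j - k with hzdef
  have hz_sa : IsSelfAdjoint z :=
    (sa_real_smul 2 (IsSelfAdjoint.of_nonneg hj0)).sub hksa
  have h2j : (2:ℝ) • j ≤ (2:ℝ) • k := real_smul_le_smul (by norm_num) hjk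
  have hz_up : z ≤ k := by
    rw [hzdef, sub_le_iff_le_add, ← two_smul ℝ k]
    exact h2j
  have hz_lo : -k ≤ z := by
    have h0 : (0:A) ≤ (2:ℝ) • j := real_smul_nonneg (by norm_num) hj0
    have := sub_le_sub_right h0 k
    rwa [zero_sub] at this
  have hsig0 : 0 ≤ sig k := sig_nonneg_of_nonneg hk
  have hnorm : ‖z‖ ≤ sig k := by
    refine le_of_forall_pos_le_add fun ε hε => ?_
    have hku : k ≤ (sig k + ε) • 1 := le_of_sig_lt hksa (by linarith)
    refine norm_le_of_between hz_sa ?_ (hz_up.trans hku)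
    calc -((sig k + ε) • (1:A)) ≤ -k := neg_le_neg hku
      _ ≤ z := hz_lo
  have hphiz : (f z).re = 2 * (f j).re - (f k).re := by
    rw [hzdef, map_sub, Complex.sub_re, re_f_real_smul]
  have habs : |(f z).re| ≤ ‖f‖ * sig k := by
    refine (re_f_abs_le f z).trans ?_
    exact mul_le_mul_of_nonneg_left hnorm (norm_nonneg f)
  have := (abs_le.mp habs).2
  rw [pf]
  linarith [hphiz ▸ this]

lemma q_bdd {k : A} (hk : 0 ≤ k) :
    BddAbove {r : ℝ | ∃ j : A, 0 ≤ j ∧ j ≤ k ∧ r = (f j).re} :=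
  ⟨pf f k, q_ub f hk⟩

lemma q_nonneg {k : A} (hk : 0 ≤ k) : 0 ≤ qf f k :=
  le_csSup (q_bdd f hk) (q_mem_zero f hk)

lemma q_le_p {k : A} (hk : 0 ≤ k) : qf f k ≤ pf f k :=
  csSup_le ⟨0, q_mem_zero f hk⟩ (q_ub f hk)

lemma phi_le_q {k : A} (hk : 0 ≤ k) : (f k).re ≤ qf f k :=
  le_csSup (q_bdd f hk) ⟨k, hk, le_rfl, rfl⟩

lemma q_zero : qf f 0 = 0 := by
  have hset : {r : ℝ | ∃ j : A, 0 ≤ j ∧ j ≤ (0:A) ∧ r = (f j).re} = {0} := by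
    refine Set.eq_singleton_iff_unique_mem.mpr ⟨q_mem_zero f le_rfl, ?_⟩
    rintro r ⟨j, hj0, hj, rfl⟩
    rw [le_antisymm hj hj0, map_zero, Complex.zero_re]
  rw [qf, hset, csSup_singleton]

lemma q_superadd {k₁ k₂ : A} (hk₁ : 0 ≤ k₁) (hk₂ : 0 ≤ k₂) :
    qf f k₁ + qf f k₂ ≤ qf f (k₁ + k₂) := by
  have hk12 : 0 ≤ k₁ + k₂ := add_nonneg hk₁ hk₂
  have H : ∀ r ∈ {r : ℝ | ∃ j : A, 0 ≤ j ∧ j ≤ k₁ ∧ r = (f j).re},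
      ∀ s ∈ {r : ℝ | ∃ j : A, 0 ≤ j ∧ j ≤ k₂ ∧ r = (f j).re}, r + s ≤ qf f (k₁ + k₂) := by
    rintro r ⟨j₁, h10, h1k, rfl⟩ s ⟨j₂, h20, h2k, rfl⟩
    exact le_csSup (q_bdd f hk12)
      ⟨j₁ + j₂, add_nonneg h10 h20, add_le_add h1k h2k, by rw [map_add, Complex.add_re]⟩
  have h1 : ∀ r ∈ {r : ℝ | ∃ j : A, 0 ≤ j ∧ j ≤ k₁ ∧ r = (f j).re},
      qf f k₂ ≤ qf f (k₁ + k₂) - r := by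
    intro r hr
    refine csSup_le ⟨0, q_mem_zero f hk₂⟩ fun s hs => ?_
    have := H r hr s hs
    linarith
  have h2 : qf f k₁ ≤ qf f (k₁ + k₂) - qf f k₂ := by
    refine csSup_le ⟨0, q_mem_zero f hk₁⟩ fun r hr => ?_
    have := h1 r hr
    linarith
  linarith

lemma q_smul {c : ℝ} (hc : 0 < c) {k : A} (hk : 0 ≤ k) : qf f (c • k) = c * qf f k := by
  have hck : 0 ≤ c • k := real_smul_nonneg hc.le hk
  refine le_antisymm ?_ ?_
  · refine csSup_le ⟨0, q_mem_zero f hck⟩ ?_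
    rintro r ⟨j, hj0, hjk, rfl⟩
    have hj'0 : 0 ≤ c⁻¹ • j := real_smul_nonneg (inv_nonneg.2 hc.le) hj0
    have hj'k : c⁻¹ • j ≤ k := by
      have := real_smul_le_smul (inv_nonneg.2 hc.le) hjk
      rwa [smul_smul, inv_mul_cancel₀ hc.ne', one_smul] at this
    have hjval : (f j).re = c * (f (c⁻¹ • j)).re := by
      rw [← re_f_real_smul, smul_smul, mul_inv_cancel₀ hc.ne', one_smul]
    rw [hjval]
    exact mul_le_mul_of_nonneg_left (le_csSup (q_bdd f hk) ⟨c⁻¹ • j, hj'0, hj'k, rfl⟩) hc.le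
  · have h3 : qf f k ≤ c⁻¹ * qf f (c • k) := by
      refine csSup_le ⟨0, q_mem_zero f hk⟩ ?_
      rintro r ⟨j, hj0, hjk, rfl⟩
      have hmem : c * (f j).re ∈ {r : ℝ | ∃ j' : A, 0 ≤ j' ∧ j' ≤ c • k ∧ r = (f j').re} :=
        ⟨c • j, real_smul_nonneg hc.le hj0, real_smul_le_smul hc.le hjk,
          (re_f_real_smul f c j).symm⟩
      have h4 := le_csSup (q_bdd f hck) hmem
      have h5 := mul_le_mul_of_nonneg_left h4 (inv_nonneg.2 hc.le)
      rwa [← mul_assoc, inv_mul_cancel₀ hc.ne', one_mul] at h5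
    have := mul_le_mul_of_nonneg_left h3 hc.le
    rwa [← mul_assoc, mul_inv_cancel₀ hc.ne', one_mul] at this

lemma p_zero : pf f 0 = 0 := by simp [pf, sig_zero]

lemma p_one : pf f 1 = (‖f‖ + (f 1).re) / 2 := by rw [pf, sig_one, mul_one]

lemma p_neg_one : pf f (-1) = -((‖f‖ + (f 1).re) / 2) := by
  rw [pf, sig_neg_one, map_neg, Complex.neg_re]
  ring

lemma p_add_le {x y : A} (hx : IsSelfAdjoint x) (hy : IsSelfAdjoint y) :
    pf f (x + y) ≤ pf f x + pf f y := by
  have h1 := sig_add_le hx hy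
  have h2 := mul_le_mul_of_nonneg_left h1 (norm_nonneg f)
  rw [pf, pf, pf, map_add, Complex.add_re]
  linarith

lemma p_smul {c : ℝ} (hc : 0 < c) {x : A} (hx : IsSelfAdjoint x) :
    pf f (c • x) = c * pf f x := by
  rw [pf, pf, sig_smul hc hx, re_f_real_smul]
  ring

lemma p_le_norm {x : A} (hx : IsSelfAdjoint x) : pf f x ≤ ‖f‖ * ‖x‖ := by
  have h1 := mul_le_mul_of_nonneg_left (sig_le_norm hx) (norm_nonneg f)
  have h2 := (abs_le.mp (re_f_abs_le f x)).2
  rw [pf]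
  linarith

lemma p'_mem_p {x : A} : pf f x ∈ {r : ℝ | ∃ k : A, 0 ≤ k ∧ r = pf f (x + k) - qf f k} :=
  ⟨0, le_rfl, by rw [add_zero, q_zero, sub_zero]⟩

lemma p'_lb {x : A} (hx : IsSelfAdjoint x) :
    ∀ r ∈ {r : ℝ | ∃ k : A, 0 ≤ k ∧ r = pf f (x + k) - qf f k}, -pf f (-x) ≤ r := by
  rintro r ⟨k, hk, rfl⟩
  have h1 := q_le_p f hk
  have h2 : pf f k ≤ pf f (x + k) + pf f (-x) := by
    have h3 := p_add_le f (hx.add (IsSelfAdjoint.of_nonneg hk)) hx.neg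
    have h4 : x + k + -x = k := by abel
    rwa [h4] at h3
  linarith

lemma p'_bdd {x : A} (hx : IsSelfAdjoint x) :
    BddBelow {r : ℝ | ∃ k : A, 0 ≤ k ∧ r = pf f (x + k) - qf f k} :=
  ⟨-pf f (-x), p'_lb f hx⟩

lemma p'_le {x : A} (hx : IsSelfAdjoint x) {k : A} (hk : 0 ≤ k) :
    pf' f x ≤ pf f (x + k) - qf f k :=
  csInf_le (p'_bdd f hx) ⟨k, hk, rfl⟩

lemma p'_le_p {x : A} (hx : IsSelfAdjoint x) : pf' f x ≤ pf f x := by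
  have := p'_le f hx (le_refl (0:A))
  rwa [add_zero, q_zero, sub_zero] at this

lemma p'_ge {x : A} (hx : IsSelfAdjoint x) : -pf f (-x) ≤ pf' f x :=
  le_csInf ⟨pf f x, p'_mem_p f⟩ (p'_lb f hx)

lemma p'_add_le {x y : A} (hx : IsSelfAdjoint x) (hy : IsSelfAdjoint y) :
    pf' f (x + y) ≤ pf' f x + pf' f y := by
  have key : ∀ a ∈ {r : ℝ | ∃ k : A, 0 ≤ k ∧ r = pf f (x + k) - qf f k},
      ∀ b ∈ {r : ℝ | ∃ k : A, 0 ≤ k ∧ r = pf f (y + k) - qf f k},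
      pf' f (x + y) ≤ a + b := by
    rintro a ⟨k₁, hk₁, rfl⟩ b ⟨k₂, hk₂, rfl⟩
    have h0 := p'_le f (hx.add hy) (add_nonneg hk₁ hk₂)
    have h1 : pf f (x + y + (k₁ + k₂)) ≤ pf f (x + k₁) + pf f (y + k₂) := by
      have h2 := p_add_le f (hx.add (IsSelfAdjoint.of_nonneg hk₁))
        (hy.add (IsSelfAdjoint.of_nonneg hk₂))
      have h3 : x + k₁ + (y + k₂) = x + y + (k₁ + k₂) := by abel
      rwa [h3] at h2
    have h4 := q_superadd f hk₁ hk₂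
    linarith
  have h5 : ∀ b ∈ {r : ℝ | ∃ k : A, 0 ≤ k ∧ r = pf f (y + k) - qf f k},
      pf' f (x + y) - b ≤ pf' f x := by
    intro b hb
    refine le_csInf ⟨pf f x, p'_mem_p f⟩ fun a ha => ?_
    have := key a ha b hb
    linarith
  have h6 : pf' f (x + y) - pf' f x ≤ pf' f y := by
    refine le_csInf ⟨pf f y, p'_mem_p f⟩ fun b hb => ?_
    have := h5 b hb
    linarith
  linarith

lemma p'_smul {c : ℝ} (hc : 0 < c) {x : A} (hx : IsSelfAdjoint x) :
    pf' f (c • x) = c * pf' f x := by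
  have hcx : IsSelfAdjoint (c • x) := sa_real_smul c hx
  refine le_antisymm ?_ ?_
  · have h1 : ∀ b ∈ {r : ℝ | ∃ k : A, 0 ≤ k ∧ r = pf f (x + k) - qf f k},
        pf' f (c • x) ≤ c * b := by
      rintro b ⟨k, hk, rfl⟩
      have hck : 0 ≤ c • k := real_smul_nonneg hc.le hk
      have h2 := p'_le f hcx hck
      have h3 : pf f (c • x + c • k) = c * pf f (x + k) := by
        rw [← smul_add]
        exact p_smul f hc (hx.add (IsSelfAdjoint.of_nonneg hk))
      rw [h3, q_smul f hc hk] at h2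
      linarith [h2]
    have h4 : c⁻¹ * pf' f (c • x) ≤ pf' f x := by
      refine le_csInf ⟨pf f x, p'_mem_p f⟩ fun b hb => ?_
      have := h1 b hb
      have h5 := mul_le_mul_of_nonneg_left this (inv_nonneg.2 hc.le)
      rwa [← mul_assoc, inv_mul_cancel₀ hc.ne', one_mul] at h5
    have := mul_le_mul_of_nonneg_left h4 hc.le
    rwa [← mul_assoc, mul_inv_cancel₀ hc.ne', one_mul] at this
  · refine le_csInf ⟨pf f (c • x), p'_mem_p f⟩ ?_
    rintro a ⟨k, hk, rfl⟩
    have hk' : 0 ≤ c⁻¹ • k := real_smul_nonneg (inv_nonneg.2 hc.le) hk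
    have h2 := p'_le f hx hk'
    have h3 : pf f (c • x + k) = c * pf f (x + c⁻¹ • k) := by
      have : c • (x + c⁻¹ • k) = c • x + k := by
        rw [smul_add, smul_smul, mul_inv_cancel₀ hc.ne', one_smul]
      rw [← this]
      exact p_smul f hc (hx.add (IsSelfAdjoint.of_nonneg hk'))
    have h4 : qf f k = c * qf f (c⁻¹ • k) := by
      have := q_smul f hc hk'
      rwa [smul_smul, mul_inv_cancel₀ hc.ne', one_smul] at this
    rw [h3, h4]
    have := mul_le_mul_of_nonneg_left h2 hc.le
    linarith [this]

end Nontriv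

end NRSAux

open NRSAux in
/-- For a hermitian continuous linear functional `f` on a unital C*-algebra,
`‖f‖ = r_1(f)`. -/
theorem norm_eq_rSeminorm_one (f : A →L[ℂ] ℂ) (hf : IsHermitianFunctional f) :
    ‖f‖ = rSeminorm (1 : A) f := by
  classical
  set S : Set ℝ := { r : ℝ | ∃ f₁ f₂ : A →L[ℂ] ℂ, IsPosFunctional f₁ ∧ IsPosFunctional f₂ ∧
    f = f₁ - f₂ ∧ (r : ℂ) = f₁ 1 + f₂ 1 } with hSdef
  have hrS : rSeminorm (1 : A) f = sInf S := rfl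
  -- every element of `S` dominates `‖f‖`
  have hlb : ∀ r ∈ S, ‖f‖ ≤ r := by
    rintro r ⟨f₁, f₂, h₁, h₂, heq, hr⟩
    have n1 := pos_norm_le h₁
    have n2 := pos_norm_le h₂
    have hfn : ‖f‖ ≤ ‖f₁‖ + ‖f₂‖ := by
      rw [heq]; exact norm_sub_le _ _
    have hrre : r = (f₁ 1).re + (f₂ 1).re := by
      have := congrArg Complex.re hr
      simpa using this
    linarith
  -- `‖f‖` itself belongs to `S`
  have hmem : ‖f‖ ∈ S := by
    rcases subsingleton_or_nontrivial A with hsub | hnt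
    · have hf0 : f = 0 := by
        ext x
        rw [Subsingleton.elim x (0:A), map_zero]
        rfl
      refine ⟨0, 0, fun x _ => le_rfl, fun x _ => le_rfl, by simp [hf0], ?_⟩
      rw [hf0]
      simp
    · -- the sandwich / Hahn-Banach construction
      set M := ‖f‖ with hM
      have hM0 : (0:ℝ) ≤ M := norm_nonneg f
      -- `f` is real on selfadjoint elements
      have hfreal : ∀ x : A, IsSelfAdjoint x → f x = ((f x).re : ℂ) := by
        intro x hx
        have h1 := hf x
        rw [hx.star_eq] at h1
        have him : (f x).im = 0 := by
          have := congrArg Complex.im h1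
          rw [Complex.conj_im] at this
          linarith
        exact Complex.ext (by simp) (by simp [him])
      -- Hahn-Banach extension below the sublinear functional `x ↦ pf' f (herm x)`
      obtain ⟨ψ, -, hψ⟩ := exists_extension_of_le_sublinear
        (⟨⊥, 0⟩ : A →ₗ.[ℝ] ℝ) (fun x => pf' f (herm x))
        (fun c hc x => by
          show pf' f (herm (c • x)) = c * pf' f (herm x)
          rw [herm_real_smul]
          exact p'_smul f hc (herm_sa x))
        (fun x y => by
          show pf' f (herm (x + y)) ≤ pf' f (herm x) + pf' f (herm y)
          rw [herm_add]
          exact p'_add_le f (herm_sa x) (herm_sa y))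
        (by
          intro x
          have hx0 : (x : A) = 0 := (Submodule.mem_bot ℝ).mp x.2
          have hz : IsSelfAdjoint (0:A) := IsSelfAdjoint.of_nonneg le_rfl
          have h1 := p'_ge f hz
          rw [neg_zero, p_zero, neg_zero] at h1
          simpa [hx0, herm_zero] using h1)
      -- basic properties of ψ
      have hψ_le_p : ∀ x : A, IsSelfAdjoint x → ψ x ≤ pf f x := by
        intro x hx
        refine (hψ x).trans ?_
        rw [herm_of_sa hx]
        exact p'_le_p f hx
      have hψ_ge_q : ∀ h : A, 0 ≤ h → qf f h ≤ ψ h := by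
        intro h hh
        have hhsa : IsSelfAdjoint h := IsSelfAdjoint.of_nonneg hh
        have h1 := hψ (-h)
        rw [herm_of_sa hhsa.neg] at h1
        have h2 := p'_le f hhsa.neg hh
        rw [neg_add_cancel, p_zero, zero_sub] at h2
        rw [map_neg] at h1
        linarith
      have hψ1 : ψ 1 = (M + (f 1).re) / 2 := by
        have u1 := hψ_le_p 1 sa_one
        have u2 := hψ_le_p (-1) sa_one.neg
        rw [map_neg] at u2
        rw [p_one] at u1
        rw [p_neg_one] at u2
        linarith
      have hψbound : ∀ x : A, |ψ (herm x)| ≤ M * ‖x‖ := by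
        have key : ∀ x : A, ψ (herm x) ≤ M * ‖x‖ := by
          intro x
          refine ((hψ (herm x)).trans ?_)
          rw [herm_of_sa (herm_sa x)]
          refine (p'_le_p f (herm_sa x)).trans ?_
          refine (p_le_norm f (herm_sa x)).trans ?_
          exact mul_le_mul_of_nonneg_left (norm_herm_le x) hM0
        intro x
        rw [abs_le]
        constructor
        · have h1 := key (-x)
          rw [show herm (-x) = -herm x by
            have := herm_real_smul (-1) x
            simpa using this, map_neg, norm_neg] at h1
          linarith
        · exact key x
      -- the continuous real-linear functional Ψ = ψ ∘ herm
      let hermL : A →ₗ[ℝ] A :=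
        { toFun := herm
          map_add' := herm_add
          map_smul' := fun t x => herm_real_smul t x }
      let Ψ : A →ₗ[ℝ] ℝ := ψ.comp hermL
      have hΨb : ∀ x : A, ‖Ψ x‖ ≤ M * ‖x‖ := by
        intro x
        rw [Real.norm_eq_abs]
        exact hψbound x
      let ΨL : A →L[ℝ] ℝ := LinearMap.mkContinuous Ψ M hΨb
      have hΨL : ∀ x : A, ΨL x = ψ (herm x) := fun x => rfl
      -- the positive functionals
      let f₁ : A →L[ℂ] ℂ := ΨL.extendTo𝕜'
      have hf₁_sa : ∀ x : A, IsSelfAdjoint x → f₁ x = ((ψ x : ℝ) : ℂ) := by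
        intro x hx
        have h1 : f₁ x = (ΨL x : ℂ) - Complex.I * (ΨL (Complex.I • x) : ℂ) :=
          ΨL.extendTo𝕜'_apply x
        rw [h1, hΨL, hΨL, herm_of_sa hx, herm_I_smul_of_sa hx, map_zero]
        simp
      have hpos₁ : IsPosFunctional f₁ := by
        intro x hx
        rw [hf₁_sa x (IsSelfAdjoint.of_nonneg hx)]
        exact Complex.zero_le_real.mpr ((q_nonneg f hx).trans (hψ_ge_q x hx))
      let f₂ : A →L[ℂ] ℂ := f₁ - f
      have hpos₂ : IsPosFunctional f₂ := by
        intro x hx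
        have hxsa : IsSelfAdjoint x := IsSelfAdjoint.of_nonneg hx
        have h1 : f₂ x = f₁ x - f x := rfl
        rw [h1, hf₁_sa x hxsa, hfreal x hxsa, ← Complex.ofReal_sub]
        refine Complex.zero_le_real.mpr ?_
        have := (phi_le_q f hx).trans (hψ_ge_q x hx)
        linarith
      refine ⟨f₁, f₂, hpos₁, hpos₂, (sub_sub_cancel f₁ f).symm, ?_⟩
      have h2 : f₂ 1 = f₁ 1 - f 1 := rfl
      rw [h2, hf₁_sa 1 sa_one, hfreal 1 sa_one]
      norm_cast
      rw [hψ1]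
      ring
  rw [hrS]
  exact le_antisymm (le_csInf ⟨‖f‖, hmem⟩ hlb) (csInf_le ⟨‖f‖, hlb⟩ hmem)
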